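/- Decomposition of the objective under SVD splitting: with Ỹ = U_{·,1:r} Z + U_{·,r+1:Ñ} Z^tr (U orthogonal, the two column blocks having orthonormal columns and mutually orthogonal), J_Ỹ(S) = J_Z(S) + trace( Z^tr X_Sᵀ (X_S X_Sᵀ + λ I)^{-1} X_S (Z^tr)ᵀ ) for any feasible S. -/
import Mathlib


open Matrix

/-- The objective `J_Y(S) = trace(Y X_Sᵀ (X_S X_Sᵀ + λ I)⁻¹ X_S Yᵀ)`. -/
noncomputable def Jobj {N M Ny k : ℕ} (X : Matrix (Fin N) (Fin M) ℝ)
    (Y : Matrix (Fin Ny) (Fin M) ℝ) (lam : ℝ) (e : Fin k → Fin N) : ℝ :=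
  Matrix.trace (Y * (X.submatrix e id)ᵀ
      * (X.submatrix e id * (X.submatrix e id)ᵀ + lam • (1 : Matrix (Fin k) (Fin k) ℝ))⁻¹
      * X.submatrix e id * Yᵀ)

theorem aux_trace (M r t m : ℕ) (U1 : Matrix (Fin m) (Fin r) ℝ) (U2 : Matrix (Fin m) (Fin t) ℝ)
    (hU1 : U1ᵀ * U1 = 1) (hU2 : U2ᵀ * U2 = 1) (hU12 : U1ᵀ * U2 = 0)
    (Z : Matrix (Fin r) (Fin M) ℝ) (Ztr : Matrix (Fin t) (Fin M) ℝ)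
    (B : Matrix (Fin M) (Fin M) ℝ) :
    Matrix.trace ((U1 * Z + U2 * Ztr) * B * (U1 * Z + U2 * Ztr)ᵀ)
      = Matrix.trace (Z * B * Zᵀ) + Matrix.trace (Ztr * B * Ztrᵀ) := by
  have hU21 : U2ᵀ * U1 = 0 := by
    have := congrArg Matrix.transpose hU12
    simpa using this
  have h1 : Matrix.trace (U1 * Z * B * (U1 * Z)ᵀ) = Matrix.trace (Z * B * Zᵀ) := by
    rw [Matrix.trace_mul_comm]
    simp only [Matrix.transpose_mul]
    rw [Matrix.mul_assoc U1 Z B, Matrix.mul_assoc Zᵀ U1ᵀ, ← Matrix.mul_assoc U1ᵀ U1, hU1,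
      Matrix.one_mul, Matrix.trace_mul_comm]
  have h2 : Matrix.trace (U2 * Ztr * B * (U2 * Ztr)ᵀ) = Matrix.trace (Ztr * B * Ztrᵀ) := by
    rw [Matrix.trace_mul_comm]
    simp only [Matrix.transpose_mul]
    rw [Matrix.mul_assoc U2 Ztr B, Matrix.mul_assoc Ztrᵀ U2ᵀ, ← Matrix.mul_assoc U2ᵀ U2, hU2,
      Matrix.one_mul, Matrix.trace_mul_comm]
  have h3 : Matrix.trace (U1 * Z * B * (U2 * Ztr)ᵀ) = 0 := by
    rw [Matrix.trace_mul_comm]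
    simp only [Matrix.transpose_mul]
    rw [Matrix.mul_assoc U1 Z B, Matrix.mul_assoc Ztrᵀ U2ᵀ, ← Matrix.mul_assoc U2ᵀ U1, hU21]
    simp
  have h4 : Matrix.trace (U2 * Ztr * B * (U1 * Z)ᵀ) = 0 := by
    rw [Matrix.trace_mul_comm]
    simp only [Matrix.transpose_mul]
    rw [Matrix.mul_assoc U2 Ztr B, Matrix.mul_assoc Zᵀ U1ᵀ, ← Matrix.mul_assoc U1ᵀ U2, hU12]
    simp
  simp only [Matrix.transpose_add, Matrix.add_mul, Matrix.mul_add, Matrix.trace_add]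
  rw [h1, h2, h3, h4]
  ring

theorem stmt_13 (Nt N M k r t : ℕ)
    (X : Matrix (Fin N) (Fin M) ℝ) (lam : ℝ) (hlam : 0 ≤ lam)
    (Ytil : Matrix (Fin Nt) (Fin M) ℝ)
    (U1 : Matrix (Fin Nt) (Fin r) ℝ) (U2 : Matrix (Fin Nt) (Fin t) ℝ)
    (hU1 : U1ᵀ * U1 = 1) (hU2 : U2ᵀ * U2 = 1) (hU12 : U1ᵀ * U2 = 0)
    (Z : Matrix (Fin r) (Fin M) ℝ) (Ztr : Matrix (Fin t) (Fin M) ℝ)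
    (hY : Ytil = U1 * Z + U2 * Ztr)
    (e : Fin k → Fin N) (he : Function.Injective e)
    (hS : (X.submatrix e id * (X.submatrix e id)ᵀ
        + lam • (1 : Matrix (Fin k) (Fin k) ℝ)).PosDef) :
    Jobj X Ytil lam e = Jobj X Z lam e
      + Matrix.trace (Ztr * (X.submatrix e id)ᵀ
          * (X.submatrix e id * (X.submatrix e id)ᵀ + lam • (1 : Matrix (Fin k) (Fin k) ℝ))⁻¹
          * X.submatrix e id * Ztrᵀ) := by
  subst hY
  unfold Jobj
  have key := aux_trace M r t Nt U1 U2 hU1 hU2 hU12 Z Ztr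
    ((X.submatrix e id)ᵀ
      * (X.submatrix e id * (X.submatrix e id)ᵀ + lam • (1 : Matrix (Fin k) (Fin k) ℝ))⁻¹
      * X.submatrix e id)
  simp only [Matrix.mul_assoc] at key ⊢
  exact key
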